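/- The one-sided Mahavier dynamical system (I_{F_{1/2,3}}^+, σ^+_{F_{1/2,3}}) does not have the shadowing property. -/

import Mathlib

open Set Filter Topology

/-- One-sided Mahavier product of a relation `F` on `X`. -/
def MahavierPlus {X : Type*} (F : Set (X × X)) : Set (ℕ → X) :=
  {x | ∀ n : ℕ, (x n, x (n + 1)) ∈ F}

/-- Two-sided Mahavier product of a relation `F` on `X`. -/
def MahavierTwo {X : Type*} (F : Set (X × X)) : Set (ℤ → X) :=
  {x | ∀ n : ℤ, (x n, x (n + 1)) ∈ F}

/-- The shift map on the one-sided Mahavier product. -/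
def shiftPlus {X : Type*} (F : Set (X × X)) (x : MahavierPlus F) : MahavierPlus F :=
  ⟨fun n => (x : ℕ → X) (n + 1), fun n => x.2 (n + 1)⟩

/-- The shift map on the two-sided Mahavier product. -/
def shiftTwo {X : Type*} (F : Set (X × X)) (x : MahavierTwo F) : MahavierTwo F :=
  ⟨fun n => (x : ℤ → X) (n + 1), fun n => x.2 (n + 1)⟩

/-- The metric `D(x,y) = sup_{n ≥ 1} d(x_n, y_n)/2^n` on one-sided sequences
(coordinates are indexed from `0` here, so the weight is `2^(n+1)`). -/
noncomputable def DPlus {X : Type*} [PseudoMetricSpace X] (x y : ℕ → X) : ℝ :=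
  ⨆ n : ℕ, dist (x n) (y n) / 2 ^ (n + 1)

/-- The metric `D(x,y) = sup_{n ∈ ℤ} d(x_n, y_n)/2^{|n|}` on two-sided sequences. -/
noncomputable def DTwo {X : Type*} [PseudoMetricSpace X] (x y : ℤ → X) : ℝ :=
  ⨆ n : ℤ, dist (x n) (y n) / 2 ^ n.natAbs

/-- Topological transitivity. -/
def TopTransitive {Y : Type*} [TopologicalSpace Y] (f : Y → Y) : Prop :=
  ∀ U V : Set Y, IsOpen U → IsOpen V → U.Nonempty → V.Nonempty →
    ∃ n : ℕ, (f^[n] '' U ∩ V).Nonempty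

/-- Topological mixing. -/
def TopMixing {Y : Type*} [TopologicalSpace Y] (f : Y → Y) : Prop :=
  ∀ U V : Set Y, IsOpen U → IsOpen V → U.Nonempty → V.Nonempty →
    ∃ n₀ : ℕ, ∀ n : ℕ, n₀ ≤ n → (f^[n] '' U ∩ V).Nonempty

/-- The shadowing property for a map `f` with respect to a distance `dY`. -/
def ShadowingProp {Y : Type*} (dY : Y → Y → ℝ) (f : Y → Y) : Prop :=
  ∀ ε : ℝ, 0 < ε → ∃ δ : ℝ, 0 < δ ∧ ∀ x : ℕ → Y,
    (∀ k : ℕ, dY (f (x k)) (x (k + 1)) < δ) →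
    ∃ y : Y, ∀ k : ℕ, dY (f^[k] y) (x k) < ε

/-- The specification property for a map `f` with respect to a distance `dY`. -/
def SpecProp {Y : Type*} (dY : Y → Y → ℝ) (f : Y → Y) : Prop :=
  ∀ ε : ℝ, 0 < ε → ∃ N : ℕ, 0 < N ∧ ∀ n : ℕ, 0 < n →
    ∀ x : Fin n → Y, ∀ k l : Fin n → ℕ,
      (∀ i, k i ≤ l i) →
      (∀ i j : Fin n, (i : ℕ) + 1 = (j : ℕ) → l i + N ≤ k j) →
      ∃ y : Y, ∀ i : Fin n, ∀ m : ℕ, k i ≤ m → m ≤ l i →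
        dY (f^[m] y) (f^[m] (x i)) ≤ ε

/-- The CR-specification property for the one-sided Mahavier product of `F`. -/
def CRSpec {X : Type*} [PseudoMetricSpace X] (F : Set (X × X)) : Prop :=
  ∀ ε : ℝ, 0 < ε → ∃ N : ℕ, 0 < N ∧ ∀ n : ℕ, 0 < n →
    ∀ x : Fin n → MahavierPlus F, ∀ k l : Fin n → ℕ,
      (∀ i, k i ≤ l i) →
      (∀ i j : Fin n, (i : ℕ) + 1 = (j : ℕ) → l i + N ≤ k j) →
      ∃ y : MahavierPlus F, ∀ i : Fin n, ∀ m : ℕ, k i ≤ m → m ≤ l i →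
        dist ((x i : ℕ → X) m) ((y : ℕ → X) m) ≤ ε

/-- The image of a set under a relation. -/
def relImage {X : Type*} (F : Set (X × X)) (A : Set X) : Set X :=
  {y | ∃ a ∈ A, (a, y) ∈ F}

/-- Composition of relations. -/
def relComp {X : Type*} (F G : Set (X × X)) : Set (X × X) :=
  {p | ∃ z : X, (p.1, z) ∈ F ∧ (z, p.2) ∈ G}

/-- Iterated composition `F^n` of a relation with itself. -/
def relPow {X : Type*} (F : Set (X × X)) : ℕ → Set (X × X)
  | 0 => {p | p.1 = p.2}
  | n + 1 => relComp (relPow F n) F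

/-- The relation `F_{1/2,3} = {(x,3x) : 0 ≤ x ≤ 1/3} ∪ {(x,x/2) : 0 ≤ x ≤ 1}` on `I = [0,1]`. -/
def F23 : Set (ℝ × ℝ) :=
  {p | (p.1 ∈ Set.Icc (0 : ℝ) (1 / 3) ∧ p.2 = 3 * p.1) ∨
       (p.1 ∈ Set.Icc (0 : ℝ) 1 ∧ p.2 = p.1 / 2)}

namespace Stmt3Aux

lemma F23_fst_mem {a b : ℝ} (h : (a, b) ∈ F23) : 0 ≤ a ∧ a ≤ 1 := by
  rcases h with ⟨⟨h1, h2⟩, _⟩ | ⟨⟨h1, h2⟩, _⟩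
  · exact ⟨h1, by linarith⟩
  · exact ⟨h1, h2⟩

lemma coord_mem {x : ℕ → ℝ} (hx : x ∈ MahavierPlus F23) (n : ℕ) : 0 ≤ x n ∧ x n ≤ 1 :=
  F23_fst_mem (hx n)

lemma bdd (x y : ℕ → ℝ) (hx : x ∈ MahavierPlus F23) (hy : y ∈ MahavierPlus F23) :
    BddAbove (Set.range fun n => dist (x n) (y n) / 2 ^ (n + 1)) := by
  refine ⟨1, ?_⟩
  rintro _ ⟨n, rfl⟩
  have hx' := coord_mem hx n
  have hy' := coord_mem hy n
  have h1 : dist (x n) (y n) ≤ 1 := by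
    rw [Real.dist_eq, abs_le]
    constructor <;> linarith [hx'.1, hx'.2, hy'.1, hy'.2]
  have h2 : (1:ℝ) ≤ 2 ^ (n+1) := one_le_pow₀ (by norm_num)
  rw [div_le_one (by positivity)]
  exact h1.trans h2

lemma dplus_lower {x y : ℕ → ℝ} (hx : x ∈ MahavierPlus F23) (hy : y ∈ MahavierPlus F23) :
    dist (x 0) (y 0) / 2 ≤ DPlus x y := by
  have := le_ciSup (bdd x y hx hy) 0
  simpa [DPlus] using this

lemma dplus_self (x : ℕ → ℝ) : DPlus x x = 0 := by
  simp [DPlus]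

lemma iter_coe (y : MahavierPlus F23) (k : ℕ) :
    ∀ n, ((shiftPlus F23)^[k] y : ℕ → ℝ) n = (y : ℕ → ℝ) (n + k) := by
  induction k with
  | zero => intro n; simp
  | succ k ih =>
      intro n
      rw [Function.iterate_succ_apply']
      show ((shiftPlus F23)^[k] y : ℕ → ℝ) (n + 1) = _
      rw [ih (n+1)]
      ring_nf

lemma orbit_pow {y : ℕ → ℝ} (hy : y ∈ MahavierPlus F23) (m : ℕ) :
    ∃ a b : ℕ, a + b = m ∧ y m * 2 ^ b = y 0 * 3 ^ a := by
  induction m with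
  | zero => exact ⟨0, 0, rfl, by norm_num⟩
  | succ m ih =>
      obtain ⟨a, b, hab, h⟩ := ih
      rcases hy m with ⟨_, heq⟩ | ⟨_, heq⟩ <;> simp only at heq
      · refine ⟨a + 1, b, by omega, ?_⟩
        rw [heq, pow_succ]
        nlinarith [h]
      · refine ⟨a, b + 1, by omega, ?_⟩
        rw [heq, pow_succ]
        nlinarith [h]


lemma tail_halv_mem (k : ℕ) : (fun n => ((1:ℝ)/2)^(k+n)) ∈ MahavierPlus F23 := by
  intro n
  refine Or.inr ⟨⟨by positivity, pow_le_one₀ (by norm_num) (by norm_num)⟩, ?_⟩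
  show ((1:ℝ)/2)^(k+(n+1)) = ((1:ℝ)/2)^(k+n) / 2
  rw [show k+(n+1) = (k+n)+1 by omega, pow_succ]
  ring

noncomputable def climbSeq (q : ℕ) : ℕ → ℝ :=
  fun n => if n ≤ q then (3:ℝ)^n / 3^q else ((1:ℝ)/2)^(n - q)

lemma climb_pair (q j : ℕ) : (climbSeq q j, climbSeq q (j+1)) ∈ F23 := by
  rcases lt_trichotomy j q with h | h | h
  · refine Or.inl ⟨⟨?_, ?_⟩, ?_⟩
    · simp only [climbSeq, if_pos h.le]
      positivity
    · simp only [climbSeq, if_pos h.le]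
      rw [div_le_div_iff₀ (by positivity) (by norm_num)]
      calc (3:ℝ)^j * 3 = 3^(j+1) := by rw [pow_succ]
        _ ≤ 3^q := pow_le_pow_right₀ (by norm_num) (by omega)
        _ = 3^q * 1 := by ring
        _ ≤ 1 * 3^q := by ring_nf; exact le_rfl
    · simp only [climbSeq, if_pos h.le, if_pos (show j+1 ≤ q by omega)]
      rw [pow_succ]
      ring
  · subst h
    refine Or.inr ⟨⟨?_, ?_⟩, ?_⟩
    · simp only [climbSeq, if_pos le_rfl]; positivity
    · simp only [climbSeq, if_pos le_rfl]
      rw [div_self (by positivity)]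
    · simp only [climbSeq, if_pos le_rfl, if_neg (show ¬ j+1 ≤ j by omega)]
      rw [div_self (show (3:ℝ)^j ≠ 0 by positivity)]
      norm_num
  · refine Or.inr ⟨⟨?_, ?_⟩, ?_⟩
    · simp only [climbSeq, if_neg (by omega : ¬ j ≤ q)]; positivity
    · simp only [climbSeq, if_neg (by omega : ¬ j ≤ q)]
      exact pow_le_one₀ (by norm_num) (by norm_num)
    · simp only [climbSeq, if_neg (by omega : ¬ j ≤ q), if_neg (by omega : ¬ j+1 ≤ q)]
      rw [show j+1-q = (j-q)+1 by omega, pow_succ]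
      ring

lemma climb_mem (q k : ℕ) : (fun n => climbSeq q (k + n)) ∈ MahavierPlus F23 := by
  intro n
  have := climb_pair q (k + n)
  simpa [show k+n+1 = k+(n+1) by omega] using this

lemma climb_nonneg (q n : ℕ) : 0 ≤ climbSeq q n := by
  unfold climbSeq; split <;> positivity

lemma pow32 {n q : ℕ} (h : n ≤ q) : (3:ℝ)^n * 2^q ≤ 3^q * 2^n := by
  obtain ⟨d, rfl⟩ := Nat.exists_eq_add_of_le h
  rw [pow_add, pow_add]
  have h1 : (2:ℝ)^d ≤ 3^d := pow_le_pow_left₀ (by norm_num) (by norm_num) d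
  have h2 : (0:ℝ) < 3^n * 2^n := by positivity
  nlinarith [h2, h1]

lemma climb_div (q n : ℕ) : climbSeq q n / 2^(n+1) ≤ ((1:ℝ)/2)^(q+1) := by
  by_cases h : n ≤ q
  · simp only [climbSeq, if_pos h]
    rw [div_div, div_pow, one_pow, div_le_div_iff₀ (by positivity) (by positivity)]
    calc (3:ℝ)^n * 2^(q+1) = ((3:ℝ)^n * 2^q) * 2 := by rw [pow_succ]; ring
      _ ≤ ((3:ℝ)^q * 2^n) * 2 := by nlinarith [pow32 h]
      _ = 1 * (3^q * 2^(n+1)) := by rw [pow_succ]; ring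
  · simp only [climbSeq, if_neg h]
    have h1 : ((1:ℝ)/2)^(n-q) ≤ 1 := pow_le_one₀ (by norm_num) (by norm_num)
    calc ((1:ℝ)/2)^(n-q) / 2^(n+1) ≤ 1 / 2^(n+1) := by
          apply div_le_div_of_nonneg_right h1 (by positivity) |>.trans_eq rfl
      _ = ((1:ℝ)/2)^(n+1) := by rw [div_pow, one_pow]
      _ ≤ ((1:ℝ)/2)^(q+1) := pow_le_pow_of_le_one (by norm_num) (by norm_num) (by omega)


noncomputable def pseudo (p q k : ℕ) : MahavierPlus F23 :=
  if h : k ≤ p then ⟨fun n => ((1:ℝ)/2)^(k+n), tail_halv_mem k⟩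
  else ⟨fun n => climbSeq q (k - (p+1) + n), climb_mem q _⟩

lemma pseudo_le {p q k : ℕ} (h : k ≤ p) :
    (pseudo p q k : ℕ → ℝ) = fun n => ((1:ℝ)/2)^(k+n) := by
  simp only [pseudo, dif_pos h]

lemma pseudo_gt {p q k : ℕ} (h : ¬ k ≤ p) :
    (pseudo p q k : ℕ → ℝ) = fun n => climbSeq q (k-(p+1)+n) := by
  simp only [pseudo, dif_neg h]

lemma key {δ : ℝ} (hδ : 0 < δ)
    (hsh : ∀ x : ℕ → MahavierPlus F23,
      (∀ k : ℕ, DPlus ((shiftPlus F23 (x k) : ℕ → ℝ)) ((x (k+1) : ℕ → ℝ)) < δ) →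
      ∃ y : MahavierPlus F23, ∀ k : ℕ,
        DPlus (((shiftPlus F23)^[k] y : ℕ → ℝ)) ((x k : ℕ → ℝ)) < 1/16)
    (p q : ℕ) (hp : ((1:ℝ)/2)^p < δ/2) (hq : ((1:ℝ)/2)^q < δ/2) :
    ∃ a : ℕ, (7:ℝ) * 2^(p+q+1) < 8 * 6^a ∧ (7:ℝ) * 6^a < 8 * 2^(p+q+1) := by
  have hps : ∀ k : ℕ, DPlus ((shiftPlus F23 (pseudo p q k) : ℕ → ℝ))
      ((pseudo p q (k+1) : ℕ → ℝ)) < δ := by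
    intro k
    rcases lt_trichotomy k p with h | h | h
    · have e : (shiftPlus F23 (pseudo p q k) : ℕ → ℝ) = (pseudo p q (k+1) : ℕ → ℝ) := by
        funext n
        show (pseudo p q k : ℕ → ℝ) (n+1) = _
        rw [pseudo_le h.le, pseudo_le (show k+1 ≤ p by omega)]
        show ((1:ℝ)/2)^(k+(n+1)) = ((1:ℝ)/2)^(k+1+n)
        congr 1; omega
      rw [e, dplus_self]; exact hδ
    · subst h
      have e1 : (shiftPlus F23 (pseudo k q k) : ℕ → ℝ) = fun n => ((1:ℝ)/2)^(k+(n+1)) := by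
        funext n
        show (pseudo k q k : ℕ → ℝ) (n+1) = _
        rw [pseudo_le le_rfl]
      have e2 : (pseudo k q (k+1) : ℕ → ℝ) = fun n => climbSeq q n := by
        funext n
        rw [pseudo_gt (show ¬ k+1 ≤ k by omega)]
        show climbSeq q (k+1-(k+1)+n) = climbSeq q n
        congr 1; omega
      rw [e1, e2]
      have hterm : ∀ n : ℕ,
          dist (((1:ℝ)/2)^(k+(n+1))) (climbSeq q n) / 2^(n+1) ≤ δ/2 := by
        intro n
        have ha0 : (0:ℝ) ≤ ((1:ℝ)/2)^(k+(n+1)) := by positivity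
        have hb0 := climb_nonneg q n
        have hd : dist (((1:ℝ)/2)^(k+(n+1))) (climbSeq q n) ≤
            ((1:ℝ)/2)^(k+(n+1)) + climbSeq q n := by
          rw [Real.dist_eq, abs_le]; constructor <;> linarith
        have hA : ((1:ℝ)/2)^(k+(n+1)) / 2^(n+1) ≤ ((1:ℝ)/2)^(k+1) := by
          rw [show k+(n+1) = (k+1)+n by omega, pow_add, mul_div_assoc]
          have h0 : ((1:ℝ)/2)^n / 2^(n+1) ≤ 1 := by
            rw [div_le_one (by positivity)]
            exact le_trans (pow_le_one₀ (by norm_num) (by norm_num))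
              (one_le_pow₀ (by norm_num))
          have hnn : (0:ℝ) ≤ ((1:ℝ)/2)^(k+1) := by positivity
          calc ((1:ℝ)/2)^(k+1) * (((1:ℝ)/2)^n / 2^(n+1))
              ≤ ((1:ℝ)/2)^(k+1) * 1 := mul_le_mul_of_nonneg_left h0 hnn
            _ = ((1:ℝ)/2)^(k+1) := mul_one _
        have hB := climb_div q n
        have hk1 : ((1:ℝ)/2)^(k+1) ≤ δ/4 := by rw [pow_succ]; linarith
        have hq1 : ((1:ℝ)/2)^(q+1) ≤ δ/4 := by rw [pow_succ]; linarith
        calc dist (((1:ℝ)/2)^(k+(n+1))) (climbSeq q n) / 2^(n+1)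
            ≤ (((1:ℝ)/2)^(k+(n+1)) + climbSeq q n) / 2^(n+1) := by gcongr
          _ = ((1:ℝ)/2)^(k+(n+1)) / 2^(n+1) + climbSeq q n / 2^(n+1) := add_div _ _ _
          _ ≤ ((1:ℝ)/2)^(k+1) + ((1:ℝ)/2)^(q+1) := add_le_add hA hB
          _ ≤ δ/2 := by linarith
      have hsup : DPlus (fun n => ((1:ℝ)/2)^(k+(n+1))) (fun n => climbSeq q n) ≤ δ/2 :=
        Real.iSup_le hterm (by linarith)
      exact lt_of_le_of_lt hsup (by linarith)
    · have e : (shiftPlus F23 (pseudo p q k) : ℕ → ℝ) = (pseudo p q (k+1) : ℕ → ℝ) := by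
        funext n
        show (pseudo p q k : ℕ → ℝ) (n+1) = _
        rw [pseudo_gt (show ¬ k ≤ p by omega), pseudo_gt (show ¬ k+1 ≤ p by omega)]
        show climbSeq q (k-(p+1)+(n+1)) = climbSeq q (k+1-(p+1)+n)
        congr 1; omega
      rw [e, dplus_self]; exact hδ
  obtain ⟨y, hy⟩ := hsh (pseudo p q) hps
  set m := p + q + 1 with hmdef
  -- coordinate bound at time 0
  have hy0 : |(y : ℕ → ℝ) 0 - 1| < 1/8 := by
    have h0 := hy 0
    rw [Function.iterate_zero_apply] at h0
    have hlow := dplus_lower y.2 (pseudo p q 0).2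
    have hx0 : (pseudo p q 0 : ℕ → ℝ) 0 = 1 := by
      rw [pseudo_le (Nat.zero_le p)]; norm_num
    rw [hx0] at hlow
    rw [Real.dist_eq] at hlow
    linarith
  have hym : |(y : ℕ → ℝ) m - 1| < 1/8 := by
    have h0 := hy m
    have hlow := dplus_lower ((shiftPlus F23)^[m] y).2 (pseudo p q m).2
    have hc1 : (((shiftPlus F23)^[m] y : ℕ → ℝ)) 0 = (y : ℕ → ℝ) m := by
      rw [iter_coe y m 0, Nat.zero_add]
    have hc2 : (pseudo p q m : ℕ → ℝ) 0 = 1 := by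
      rw [pseudo_gt (show ¬ m ≤ p by omega)]
      show climbSeq q (m-(p+1)+0) = 1
      rw [show m-(p+1)+0 = q by omega]
      simp only [climbSeq, if_pos le_rfl]
      rw [div_self (by positivity)]
    rw [hc1, hc2, Real.dist_eq] at hlow
    linarith
  obtain ⟨a, b, hab, hpow⟩ := orbit_pow y.2 m
  set Y0 := (y : ℕ → ℝ) 0 with hY0
  set Ym := (y : ℕ → ℝ) m with hYm
  have hY0m := coord_mem y.2 0
  have hYmm := coord_mem y.2 m
  have h6 : Ym * 2^m = Y0 * 6^a := by
    have h1 : Ym * 2^b * 2^a = Y0 * 3^a * 2^a := by rw [hpow]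
    calc Ym * 2^m = Ym * 2^b * 2^a := by
          rw [mul_assoc, ← pow_add]; congr 2; omega
      _ = Y0 * 3^a * 2^a := h1
      _ = Y0 * 6^a := by
          rw [mul_assoc, ← mul_pow]; norm_num
  have hY0gt : (7:ℝ)/8 < Y0 := by
    rcases abs_lt.mp hy0 with ⟨h1, _⟩; linarith
  have hYmgt : (7:ℝ)/8 < Ym := by
    rcases abs_lt.mp hym with ⟨h1, _⟩; linarith
  have h2m : (0:ℝ) < 2^m := by positivity
  have h6a : (0:ℝ) < 6^a := by positivity
  refine ⟨a, ?_, ?_⟩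
  · nlinarith [mul_nonneg (sub_nonneg.mpr hY0m.2) h6a.le,
      mul_pos (show (0:ℝ) < 8*Ym-7 by linarith) h2m, h6]
  · nlinarith [mul_nonneg (sub_nonneg.mpr hYmm.2) h2m.le,
      mul_pos (show (0:ℝ) < 8*Y0-7 by linarith) h6a, h6]

end Stmt3Aux

/-- The one-sided Mahavier system of `F_{1/2,3}` does not have the
shadowing property. -/
theorem stmt3 :
    ¬ ShadowingProp (fun a b : MahavierPlus F23 => DPlus (a : ℕ → ℝ) (b : ℕ → ℝ))
        (shiftPlus F23) := by
  intro h
  obtain ⟨δ, hδ, hsh⟩ := h (1/16) (by norm_num)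
  obtain ⟨P, hP⟩ : ∃ P : ℕ, ((1:ℝ)/2)^P < δ/2 :=
    exists_pow_lt_of_lt_one (by linarith) (by norm_num)
  have hP1 : ((1:ℝ)/2)^(P+1) < δ/2 :=
    lt_of_le_of_lt (pow_le_pow_of_le_one (by norm_num) (by norm_num) (by omega)) hP
  obtain ⟨a, ha1, ha2⟩ := Stmt3Aux.key hδ hsh P P hP hP
  obtain ⟨a', hb1, hb2⟩ := Stmt3Aux.key hδ hsh P (P+1) hP hP1
  rw [show P+(P+1)+1 = (P+P+1)+1 by omega] at hb1 hb2
  set m := P + P + 1 with hm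
  have h2m : (0:ℝ) < 2^m := by positivity
  have h6a : (0:ℝ) < 6^a := by positivity
  have h6a' : (0:ℝ) < 6^(a') := by positivity
  have hstep : (2:ℝ)^(m+1) = 2 * 2^m := by rw [pow_succ]; ring
  have hle : a + 1 ≤ a' := by
    by_contra hc
    push_neg at hc
    have h66 : (6:ℝ)^(a') ≤ 6^a := pow_le_pow_right₀ (by norm_num) (by omega)
    nlinarith [hb1, ha2, h66, h2m, hstep]
  have h6le : (6:ℝ)^(a+1) ≤ 6^(a') := pow_le_pow_right₀ (by norm_num) hle
  have h6succ : (6:ℝ)^(a+1) = 6 * 6^a := by rw [pow_succ]; ring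
  nlinarith [ha1, hb2, h6le, h6succ, h6a, h2m, hstep]
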